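/- Let $\mathcal{C}\subseteq\mathbb{R}^d$, and suppose $f$ is bounded above by $M_f$. Define $s_N := \sup_{\bm{w}\in\mathcal{C}} G_N(\bm{w})$ with $G_N(\bm{w}) = \mathbb{E}_{\bm{x}\sim\mathcal{D}}[e^{N f_{\bm{w}}(\bm{x})}]$. Then $\lim_{N\to\infty}\frac{1}{N}\log s_N = \sup_{\bm{w}\in\mathcal{C}}\Psi(\bm{w})$, where $\Psi(\bm{w})$ is the essential supremum of $f_{\bm{w}}(\bm{x})$ under $\mathcal{D}$. -/
import Mathlib


open MeasureTheory Real Filter Set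

/-- the normalized log of `s_N = sup_{w ∈ C} G_N(w)` converges to
`sup_{w ∈ C} Ψ(w)`, where `Ψ(w)` is the essential supremum of `f_w(x)` under `D`. -/
theorem log_sup_moment_tendsto_sup_essSup
    (d p : ℕ)
    (f : EuclideanSpace ℝ (Fin d) → EuclideanSpace ℝ (Fin p) → ℝ)
    (D : Measure (EuclideanSpace ℝ (Fin p))) [IsProbabilityMeasure D]
    (hmeas : ∀ w, Measurable (f w))
    (Mf : ℝ) (hbound : ∀ w x, f w x ≤ Mf)
    (C : Set (EuclideanSpace ℝ (Fin d))) (hC : C.Nonempty)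
    (Ψ : EuclideanSpace ℝ (Fin d) → ℝ)
    (hΨ : ∀ w, Ψ w = sInf {a : ℝ | D {x | f w x ≤ a} = 1})
    (hΨfin : BddAbove (Ψ '' C))
    (hlim : ∀ w, Filter.Tendsto
      (fun N : ℝ => Real.log (∫ x, Real.exp (N * f w x) ∂D) / N)
      Filter.atTop (nhds (Ψ w))) :
    Filter.Tendsto
      (fun N : ℝ =>
        Real.log (sSup ((fun w => ∫ x, Real.exp (N * f w x) ∂D) '' C)) / N)
      Filter.atTop (nhds (sSup (Ψ '' C))) := by
  have hΨC_ne : (Ψ '' C).Nonempty := hC.image Ψ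
  -- membership set facts
  have hup : ∀ w a b, a ≤ b → D {x | f w x ≤ a} = 1 → D {x | f w x ≤ b} = 1 := by
    intro w a b hab ha
    refine le_antisymm prob_le_one ?_
    calc (1 : ENNReal) = D {x | f w x ≤ a} := ha.symm
    _ ≤ D {x | f w x ≤ b} := measure_mono fun x hx => le_trans hx hab
  have hMfmem : ∀ w, D {x | f w x ≤ Mf} = 1 := by
    intro w
    have : {x | f w x ≤ Mf} = univ := eq_univ_of_forall fun x => hbound w x
    simp [this]
  -- a.e. bound f w x ≤ Ψ w
  have hae : ∀ w, ∀ᵐ x ∂D, f w x ≤ Ψ w := by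
    intro w
    have hS1 : ∀ ε : ℝ, 0 < ε → D {x | f w x ≤ Ψ w + ε} = 1 := by
      intro ε hε
      set S := {a : ℝ | D {x | f w x ≤ a} = 1} with hSdef
      by_cases bdd : BddBelow S
      · have hlt : sInf S < Ψ w + ε := by rw [← hΨ w]; linarith
        obtain ⟨a, haS, halt⟩ := (csInf_lt_iff bdd ⟨Mf, hMfmem w⟩).mp hlt
        exact hup w a _ halt.le haS
      · obtain ⟨a, haS, halt⟩ := (not_bddBelow_iff.mp bdd) (Ψ w + ε)
        exact hup w a _ halt.le haS
    have hnull : ∀ n : ℕ, D {x | Ψ w + 1/(n+1) ≤ f w x} = 0 := by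
      intro n
      have hpos : (0:ℝ) < 1/(2*(n+1)) := by positivity
      have h1 := hS1 _ hpos
      have hsub : {x | Ψ w + 1/(n+1) ≤ f w x} ⊆ {x | f w x ≤ Ψ w + 1/(2*(n+1))}ᶜ := by
        intro x hx
        simp only [mem_compl_iff, mem_setOf_eq, not_le] at hx ⊢
        have : (1:ℝ)/(2*(n+1)) < 1/(n+1) := by
          rw [div_lt_div_iff₀ (by positivity) (by positivity)]; nlinarith [Nat.cast_nonneg (α := ℝ) n]
        linarith
      have hms : MeasurableSet {x | f w x ≤ Ψ w + 1/(2*(n+1))} :=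
        measurableSet_le (hmeas w) measurable_const
      have hcompl : D {x | f w x ≤ Ψ w + 1/(2*(n+1))}ᶜ = 0 := by
        rw [measure_compl hms (measure_ne_top D _), h1, measure_univ, tsub_self]
      exact measure_mono_null hsub hcompl
    rw [ae_iff]
    refine measure_mono_null ?_ (measure_iUnion_null hnull)
    intro x hx
    simp only [mem_setOf_eq, not_le] at hx
    obtain ⟨n, hn⟩ := exists_nat_one_div_lt (sub_pos.mpr hx)
    exact mem_iUnion.mpr ⟨n, by simp only [mem_setOf_eq]; push_cast; linarith⟩
  -- integrability
  have hInt : ∀ N : ℝ, 0 ≤ N → ∀ w, Integrable (fun x => Real.exp (N * f w x)) D := by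
    intro N hN w
    refine Integrable.mono' (integrable_const (Real.exp (N * Mf)))
      (((hmeas w).const_mul N).exp.aestronglyMeasurable) ?_
    refine ae_of_all _ fun x => ?_
    rw [Real.norm_eq_abs, abs_of_pos (exp_pos _)]
    exact Real.exp_le_exp.mpr (mul_le_mul_of_nonneg_left (hbound w x) hN)
  have hGpos : ∀ N : ℝ, 0 ≤ N → ∀ w, 0 < ∫ x, Real.exp (N * f w x) ∂D := by
    intro N hN w
    exact integral_exp_pos (hInt N hN w)
  have hGle : ∀ N : ℝ, 0 ≤ N → ∀ w, (∫ x, Real.exp (N * f w x) ∂D) ≤ Real.exp (N * Ψ w) := by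
    intro N hN w
    calc (∫ x, Real.exp (N * f w x) ∂D) ≤ ∫ _x, Real.exp (N * Ψ w) ∂D := by
          refine integral_mono_ae (hInt N hN w) (integrable_const _) ?_
          filter_upwards [hae w] with x hx
          exact Real.exp_le_exp.mpr (mul_le_mul_of_nonneg_left hx hN)
    _ = Real.exp (N * Ψ w) := by simp
  -- sSup facts
  have hbddG : ∀ N : ℝ, 0 ≤ N → BddAbove ((fun w => ∫ x, Real.exp (N * f w x) ∂D) '' C) := by
    intro N hN
    refine ⟨Real.exp (N * sSup (Ψ '' C)), ?_⟩
    rintro _ ⟨w, hw, rfl⟩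
    refine (hGle N hN w).trans (Real.exp_le_exp.mpr (mul_le_mul_of_nonneg_left ?_ hN))
    exact le_csSup hΨfin ⟨w, hw, rfl⟩
  have hsSup_le : ∀ N : ℝ, 0 ≤ N →
      sSup ((fun w => ∫ x, Real.exp (N * f w x) ∂D) '' C) ≤ Real.exp (N * sSup (Ψ '' C)) := by
    intro N hN
    refine csSup_le (hC.image _) ?_
    rintro _ ⟨w, hw, rfl⟩
    refine (hGle N hN w).trans (Real.exp_le_exp.mpr (mul_le_mul_of_nonneg_left ?_ hN))
    exact le_csSup hΨfin ⟨w, hw, rfl⟩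
  obtain ⟨w₀, hw₀⟩ := hC
  have hsSup_pos : ∀ N : ℝ, 0 ≤ N →
      0 < sSup ((fun w => ∫ x, Real.exp (N * f w x) ∂D) '' C) := by
    intro N hN
    exact lt_of_lt_of_le (hGpos N hN w₀) (le_csSup (hbddG N hN) ⟨w₀, hw₀, rfl⟩)
  set u : ℝ → ℝ := fun N =>
    Real.log (sSup ((fun w => ∫ x, Real.exp (N * f w x) ∂D) '' C)) / N with hu
  -- upper bound
  have hub : ∀ᶠ N in atTop, u N ≤ sSup (Ψ '' C) := by
    filter_upwards [eventually_gt_atTop (0:ℝ)] with N hN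
    rw [hu, div_le_iff₀ hN]
    calc Real.log (sSup ((fun w => ∫ x, Real.exp (N * f w x) ∂D) '' C))
        ≤ Real.log (Real.exp (N * sSup (Ψ '' C))) :=
          Real.log_le_log (hsSup_pos N hN.le) (hsSup_le N hN.le)
    _ = N * sSup (Ψ '' C) := Real.log_exp _
    _ = sSup (Ψ '' C) * N := mul_comm _ _
  -- lower bound pointwise in w
  have hlb : ∀ w, w ∈ C → ∀ᶠ N in atTop,
      Real.log (∫ x, Real.exp (N * f w x) ∂D) / N ≤ u N := by
    intro w hw
    filter_upwards [eventually_gt_atTop (0:ℝ)] with N hN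
    rw [hu]
    have hle : (∫ x, Real.exp (N * f w x) ∂D) ≤
        sSup ((fun w => ∫ x, Real.exp (N * f w x) ∂D) '' C) :=
      le_csSup (hbddG N hN.le) ⟨w, hw, rfl⟩
    exact (div_le_div_iff_of_pos_right hN).mpr (Real.log_le_log (hGpos N hN.le w) hle)
  -- boundedness
  have hBA : IsBoundedUnder (· ≤ ·) atTop u := ⟨sSup (Ψ '' C), hub⟩
  have hBB : IsBoundedUnder (· ≥ ·) atTop u := by
    obtain ⟨c, hc⟩ : IsBoundedUnder (· ≥ ·) atTop
        (fun N : ℝ => Real.log (∫ x, Real.exp (N * f w₀ x) ∂D) / N) :=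
      (hlim w₀).isBoundedUnder_ge
    refine ⟨c, ?_⟩
    rw [eventually_map]
    filter_upwards [eventually_map.mp hc, hlb w₀ hw₀] with N h1 h2
    exact le_trans h1 h2
  -- limsup / liminf
  refine tendsto_of_le_liminf_of_limsup_le ?_ ?_ hBA hBB
  · refine csSup_le hΨC_ne ?_
    rintro _ ⟨w, hw, rfl⟩
    have h1 : Ψ w = liminf (fun N : ℝ => Real.log (∫ x, Real.exp (N * f w x) ∂D) / N) atTop :=
      ((hlim w).liminf_eq).symm
    rw [h1]
    exact liminf_le_liminf (hlb w hw) (hlim w).isBoundedUnder_ge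
      (hBA.isCoboundedUnder_ge)
  · exact limsup_le_of_le hBB.isCoboundedUnder_le hub
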